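/- The function Φ is continuous on [0,∞)²; for every fixed y > 0 the map x ↦ Φ(x, y) is strictly increasing on [0,∞); for every fixed x > 0 the map y ↦ Φ(x, y) is strictly increasing on [0,∞); and for every x ≥ 0 and y > 0, Φ(x, y) < y · kl(μ_j, μ₁). -/

import Mathlib

open MeasureTheory Real Set Filter Topology

private def klg (b : ℝ → ℝ) (m τ θ : ℝ) : ℝ := b θ - b τ - m * (θ - τ)

private lemma klg_self (b : ℝ → ℝ) (m τ : ℝ) : klg b m τ τ = 0 := by simp [klg]

private lemma klg_hasDerivAt {b b' : ℝ → ℝ} {θ : ℝ} (h : HasDerivAt b (b' θ) θ) (m τ : ℝ) :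
    HasDerivAt (klg b m τ) (b' θ - m) θ := by
  have := (h.sub_const (b τ)).sub (((hasDerivAt_id θ).sub_const τ).const_mul m)
  rw [show klg b m τ = ((fun x => b x - b τ) - fun y => m * (y - τ)) from by
    funext y; simp [klg]]
  simpa using this

private lemma klg_pos {s : Set ℝ} (hco : Convex ℝ s) {b b' : ℝ → ℝ}
    (hder : ∀ θ ∈ s, HasDerivAt b (b' θ) θ) (hmono : StrictMonoOn b' s)
    {τ θ : ℝ} (hτ : τ ∈ s) (hθ : θ ∈ s) (hne : θ ≠ τ) :
    0 < klg b (b' τ) τ θ := by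
  have hIcc : ∀ a c : ℝ, a ∈ s → c ∈ s → Icc a c ⊆ s := fun a c ha hc =>
    (hco.ordConnected).out ha hc
  rcases lt_or_gt_of_ne hne with h | h
  · obtain ⟨c, hc, hceq⟩ := exists_hasDerivAt_eq_slope b b' h
      (fun z hz => (hder z (hIcc _ _ hθ hτ hz)).continuousAt.continuousWithinAt)
      (fun z hz => hder z (hIcc _ _ hθ hτ (Ioo_subset_Icc_self hz)))
    have hcs : c ∈ s := hIcc _ _ hθ hτ (Ioo_subset_Icc_self hc)
    have hlt : b' c < b' τ := hmono hcs hτ hc.2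
    rw [eq_div_iff (by linarith : τ - θ ≠ 0)] at hceq
    simp only [klg]
    nlinarith
  · obtain ⟨c, hc, hceq⟩ := exists_hasDerivAt_eq_slope b b' h
      (fun z hz => (hder z (hIcc _ _ hτ hθ hz)).continuousAt.continuousWithinAt)
      (fun z hz => hder z (hIcc _ _ hτ hθ (Ioo_subset_Icc_self hz)))
    have hcs : c ∈ s := hIcc _ _ hτ hθ (Ioo_subset_Icc_self hc)
    have hlt : b' τ < b' c := hmono hτ hcs hc.1
    rw [eq_div_iff (by linarith : θ - τ ≠ 0)] at hceq
    simp only [klg]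
    nlinarith

private lemma klg_nonneg {s : Set ℝ} (hco : Convex ℝ s) {b b' : ℝ → ℝ}
    (hder : ∀ θ ∈ s, HasDerivAt b (b' θ) θ) (hmono : StrictMonoOn b' s)
    {τ θ : ℝ} (hτ : τ ∈ s) (hθ : θ ∈ s) :
    0 ≤ klg b (b' τ) τ θ := by
  rcases eq_or_ne θ τ with rfl | hne
  · simp [klg_self]
  · exact (klg_pos hco hder hmono hτ hθ hne).le

private lemma klg_anti {s : Set ℝ} (hco : Convex ℝ s) {b b' : ℝ → ℝ}
    (hder : ∀ θ ∈ s, HasDerivAt b (b' θ) θ) (hmono : StrictMonoOn b' s)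
    {θ₁ θ θ₀ : ℝ} (h1 : θ₁ ∈ s) (hθ : θ ∈ s) (hθ₀ : θ₀ ∈ s)
    (hlt : θ < θ₀) (hle : θ₀ ≤ θ₁) :
    klg b (b' θ₁) θ₁ θ₀ < klg b (b' θ₁) θ₁ θ := by
  have hIcc : Icc θ θ₀ ⊆ s := (hco.ordConnected).out hθ hθ₀
  obtain ⟨c, hc, hceq⟩ := exists_hasDerivAt_eq_slope (klg b (b' θ₁) θ₁)
      (fun z => b' z - b' θ₁) hlt
      (fun z hz => (klg_hasDerivAt (hder z (hIcc hz)) _ _).continuousAt.continuousWithinAt)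
      (fun z hz => klg_hasDerivAt (hder z (hIcc (Ioo_subset_Icc_self hz))) _ _)
  have hcs : c ∈ s := hIcc (Ioo_subset_Icc_self hc)
  have hblt : b' c < b' θ₁ := hmono hcs h1 (lt_of_lt_of_le hc.2 hle)
  rw [eq_div_iff (by linarith : θ₀ - θ ≠ 0)] at hceq
  nlinarith

private lemma lt_of_deriv_pos_left {F : ℝ → ℝ} {τ d : ℝ} (hF : HasDerivAt F d τ) (hd : 0 < d)
    {s : Set ℝ} (hop : IsOpen s) (hτ : τ ∈ s) :
    ∃ θ ∈ s, θ < τ ∧ F θ < F τ := by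
  have hslope := hasDerivAt_iff_tendsto_slope.mp hF
  have h1 : ∀ᶠ θ in 𝓝[≠] τ, 0 < slope F τ θ := hslope.eventually (eventually_gt_nhds hd)
  have h2 : ∀ᶠ θ in 𝓝[<] τ, 0 < slope F τ θ :=
    h1.filter_mono (nhdsWithin_mono τ (fun z hz => ne_of_lt hz))
  have h3 : ∀ᶠ θ in 𝓝[<] τ, θ ∈ s :=
    eventually_nhdsWithin_of_eventually_nhds (hop.eventually_mem hτ)
  obtain ⟨θ, ⟨hpos, hθs⟩, hθlt⟩ := ((h2.and h3).and self_mem_nhdsWithin).exists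
  refine ⟨θ, hθs, hθlt, ?_⟩
  have hslope' : slope F τ θ = (F θ - F τ) / (θ - τ) := by
    rw [slope_def_field]
  rw [hslope'] at hpos
  rcases div_pos_iff.mp hpos with ⟨_, h⟩ | ⟨h, _⟩
  · linarith [hθlt]
  · linarith

private lemma mono_aux {s : Set ℝ} (hco : Convex ℝ s) (hop : IsOpen s)
    {b b' : ℝ → ℝ} (hder : ∀ θ ∈ s, HasDerivAt b (b' θ) θ)
    (hmono : StrictMonoOn b' s)
    {θ₁ θj : ℝ} (h1 : θ₁ ∈ s) (hj : θj ∈ s) (hθlt : θj < θ₁)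
    {G : ℝ → ℝ → ℝ}
    (hG : ∀ x y, G x y = sInf {v | ∃ θ ∈ s,
        v = x * klg b (b' θ₁) θ₁ θ + y * klg b (b' θj) θj θ}) :
    (∀ x, 0 ≤ x → ∀ y, 0 < y → G x y < y * klg b (b' θj) θj θ₁) ∧
      (∀ y, 0 < y → StrictMonoOn (fun x => G x y) (Set.Ici 0)) := by
  have hmu : b' θj < b' θ₁ := hmono hj h1 hθlt
  have hA : ∀ θ ∈ s, 0 ≤ klg b (b' θ₁) θ₁ θ := fun θ hθ => klg_nonneg hco hder hmono h1 hθ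
  have hB : ∀ θ ∈ s, 0 ≤ klg b (b' θj) θj θ := fun θ hθ => klg_nonneg hco hder hmono hj hθ
  have hSne : ∀ x y : ℝ, {v | ∃ θ ∈ s,
      v = x * klg b (b' θ₁) θ₁ θ + y * klg b (b' θj) θj θ}.Nonempty :=
    fun x y => ⟨_, θ₁, h1, rfl⟩
  have hSbdd : ∀ x y : ℝ, 0 ≤ x → 0 ≤ y → BddBelow {v | ∃ θ ∈ s,
      v = x * klg b (b' θ₁) θ₁ θ + y * klg b (b' θj) θj θ} := by
    intro x y hx hy
    refine ⟨0, ?_⟩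
    rintro v ⟨θ, hθ, rfl⟩
    exact add_nonneg (mul_nonneg hx (hA θ hθ)) (mul_nonneg hy (hB θ hθ))
  have hGle : ∀ x y : ℝ, 0 ≤ x → 0 ≤ y → ∀ θ ∈ s,
      G x y ≤ x * klg b (b' θ₁) θ₁ θ + y * klg b (b' θj) θj θ := by
    intro x y hx hy θ hθ
    rw [hG]
    exact csInf_le (hSbdd x y hx hy) ⟨θ, hθ, rfl⟩
  have key1 : ∀ x, 0 ≤ x → ∀ y, 0 < y → G x y < y * klg b (b' θj) θj θ₁ := by
    intro x hx y hy
    set F : ℝ → ℝ := fun θ => x * klg b (b' θ₁) θ₁ θ + y * klg b (b' θj) θj θ with hF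
    have hFder : HasDerivAt F (x * (b' θ₁ - b' θ₁) + y * (b' θ₁ - b' θj)) θ₁ :=
      ((klg_hasDerivAt (hder θ₁ h1) (b' θ₁) θ₁).const_mul x).add
        ((klg_hasDerivAt (hder θ₁ h1) (b' θj) θj).const_mul y)
    have hd : 0 < x * (b' θ₁ - b' θ₁) + y * (b' θ₁ - b' θj) := by nlinarith
    obtain ⟨θ, hθs, hθlt1, hFlt⟩ := lt_of_deriv_pos_left hFder hd hop h1
    have hGF : G x y ≤ F θ := hGle x y hx hy.le θ hθs
    have hF1 : F θ₁ = y * klg b (b' θj) θj θ₁ := by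
      simp [hF, klg_self]
    calc G x y ≤ F θ := hGF
      _ < F θ₁ := hFlt
      _ = y * klg b (b' θj) θj θ₁ := hF1
  refine ⟨key1, ?_⟩
  intro y hy x' hx' x hx hxx'
  show G x' y < G x y
  have hx'0 : (0:ℝ) ≤ x' := hx'
  have hxpos : (0:ℝ) < x := lt_of_le_of_lt hx'0 hxx'
  have hδ : 0 < y * klg b (b' θj) θj θ₁ - G x y :=
    sub_pos.mpr (key1 x hxpos.le y hy)
  set δ := y * klg b (b' θj) θj θ₁ - G x y with hδdef
  set gap := δ / (2 * y * (b' θ₁ - b' θj)) with hgapdef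
  have hgappos : 0 < gap := div_pos hδ (by nlinarith)
  obtain ⟨r, hr0, hrs⟩ := Metric.isOpen_iff.mp hop θ₁ h1
  set θ₀ := θ₁ - min gap (r / 2) with hθ₀def
  have hminpos : 0 < min gap (r/2) := lt_min hgappos (by linarith)
  have hθ₀s : θ₀ ∈ s := by
    apply hrs
    have habs : dist θ₀ θ₁ = min gap (r/2) := by
      rw [Real.dist_eq, hθ₀def]
      have h9 : θ₁ - min gap (r/2) - θ₁ = -(min gap (r/2)) := by ring
      rw [h9, abs_neg, abs_of_pos hminpos]
    rw [Metric.mem_ball, habs]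
    exact lt_of_le_of_lt (min_le_right _ _) (by linarith)
  have hθ₀lt : θ₀ < θ₁ := by rw [hθ₀def]; linarith
  set c := klg b (b' θ₁) θ₁ θ₀ with hcdef
  have hcpos : 0 < c := klg_pos hco hder hmono h1 hθ₀s (ne_of_lt hθ₀lt)
  set ε := min (δ/2) ((x - x') * c) with hεdef
  have hεpos : 0 < ε := lt_min (by linarith) (by nlinarith)
  have hlt2 : sInf {v | ∃ θ ∈ s,
      v = x * klg b (b' θ₁) θ₁ θ + y * klg b (b' θj) θj θ} < G x y + ε := by
    rw [← hG]; linarith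
  obtain ⟨v, ⟨θ, hθs, rfl⟩, hvlt⟩ := exists_lt_of_csInf_lt (hSne x y) hlt2
  have hxA : 0 ≤ x * klg b (b' θ₁) θ₁ θ := mul_nonneg hxpos.le (hA θ hθs)
  have hεle : ε ≤ δ/2 := min_le_left _ _
  have hBlt : y * klg b (b' θj) θj θ < y * klg b (b' θj) θj θ₁ - δ/2 := by linarith
  have hid : klg b (b' θ₁) θ₁ θ + (klg b (b' θj) θj θ₁ - klg b (b' θj) θj θ)
      = (b' θ₁ - b' θj) * (θ₁ - θ) := by simp only [klg]; ring
  have h5 : δ / (2*y) < klg b (b' θj) θj θ₁ - klg b (b' θj) θj θ := by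
    rw [div_lt_iff₀ (by positivity)]
    nlinarith
  have h6 : gap < θ₁ - θ := by
    have h7 : δ/(2*y) < (b' θ₁ - b' θj) * (θ₁ - θ) := by
      have := hA θ hθs
      linarith [hid]
    rw [hgapdef, div_lt_iff₀ (by nlinarith : (0:ℝ) < 2*y*(b' θ₁ - b' θj))]
    rw [div_lt_iff₀ (by positivity : (0:ℝ) < 2*y)] at h7
    nlinarith
  have hθθ₀ : θ < θ₀ := by
    have := min_le_left gap (r/2)
    rw [hθ₀def]; linarith
  have hAc : c < klg b (b' θ₁) θ₁ θ :=
    klg_anti hco hder hmono h1 hθs hθ₀s hθθ₀ (le_of_lt hθ₀lt)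
  have hεle2 : ε ≤ (x - x') * c := min_le_right _ _
  calc G x' y ≤ x' * klg b (b' θ₁) θ₁ θ + y * klg b (b' θj) θj θ :=
        hGle x' y hx'0 hy.le θ hθs
    _ = (x * klg b (b' θ₁) θ₁ θ + y * klg b (b' θj) θj θ)
        - (x - x') * klg b (b' θ₁) θ₁ θ := by ring
    _ < (G x y + ε) - (x - x') * c := by
        have : (x - x') * c < (x - x') * klg b (b' θ₁) θ₁ θ := by nlinarith
        linarith
    _ ≤ G x y := by linarith

private lemma klg_eq (b : ℝ → ℝ) (m τ θ : ℝ) : klg b m τ θ = b θ - b τ - m * (θ - τ) := rfl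


private lemma theta_convex (ρ : Measure ℝ) [SigmaFinite ρ] :
    Convex ℝ {θ : ℝ | Integrable (fun x => exp (θ * x)) ρ} := by
  intro θ₀ h₀ θ₁ h₁ a c ha hc hac
  simp only [mem_setOf_eq, smul_eq_mul] at *
  have hg : Integrable (fun x => a * exp (θ₀ * x) + c * exp (θ₁ * x)) ρ :=
    (h₀.const_mul a).add (h₁.const_mul c)
  refine hg.mono (Continuous.aestronglyMeasurable (by continuity)) ?_
  refine ae_of_all _ (fun x => ?_)
  rw [norm_eq_abs, norm_eq_abs, abs_of_pos (exp_pos _), abs_of_nonneg (by positivity)]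
  have hcvx := convexOn_exp.2 (mem_univ (θ₀ * x)) (mem_univ (θ₁ * x)) ha hc hac
  simp only [smul_eq_mul] at hcvx
  calc Real.exp ((a * θ₀ + c * θ₁) * x) = Real.exp (a * (θ₀ * x) + c * (θ₁ * x)) := by ring_nf
    _ ≤ a * Real.exp (θ₀ * x) + c * Real.exp (θ₁ * x) := hcvx

theorem Phi_continuous_strictMono_lt
    (ρ : Measure ℝ) [SigmaFinite ρ]
    (Θ : Set ℝ) (hΘ : Θ = {θ : ℝ | Integrable (fun x => exp (θ * x)) ρ})
    (b b' b'' : ℝ → ℝ)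
    (hb : ∀ θ ∈ Θ, b θ = log (∫ x, exp (θ * x) ∂ρ))
    (hb' : ∀ θ ∈ interior Θ, HasDerivAt b (b' θ) θ)
    (hb'' : ∀ θ ∈ interior Θ, HasDerivAt b' (b'' θ) θ)
    (hbpos : ∀ θ ∈ interior Θ, 0 < b'' θ)
    (Iset : Set ℝ) (hI : Iset = b' '' (interior Θ))
    (kl : ℝ → ℝ → ℝ)
    (hkl : ∀ θ ∈ interior Θ, ∀ θ' ∈ interior Θ,
      kl (b' θ) (b' θ') = b θ' - b θ - b' θ * (θ' - θ))
    (μ₁ μj : ℝ) (hμ₁ : μ₁ ∈ Iset) (hμj : μj ∈ Iset) (hlt : μj < μ₁)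
    (Φ : ℝ → ℝ → ℝ)
    (hΦ : ∀ x y : ℝ, Φ x y =
      sInf {v : ℝ | ∃ lam ∈ Iset, v = x * kl μ₁ lam + y * kl μj lam}) :
    ContinuousOn (fun p : ℝ × ℝ => Φ p.1 p.2) (Set.Ici 0 ×ˢ Set.Ici 0) ∧
      (∀ y : ℝ, 0 < y → StrictMonoOn (fun x => Φ x y) (Set.Ici 0)) ∧
      (∀ x : ℝ, 0 < x → StrictMonoOn (fun y => Φ x y) (Set.Ici 0)) ∧
      (∀ x : ℝ, 0 ≤ x → ∀ y : ℝ, 0 < y → Φ x y < y * kl μj μ₁) := by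
  have hco : Convex ℝ (interior Θ) := by
    have h := theta_convex ρ
    rw [← hΘ] at h
    exact h.interior
  have hop : IsOpen (interior Θ) := isOpen_interior
  have hder : ∀ θ ∈ interior Θ, HasDerivAt b (b' θ) θ := hb'
  have hmono : StrictMonoOn b' (interior Θ) := by
    apply strictMonoOn_of_deriv_pos hco
    · exact fun θ hθ => (hb'' θ hθ).continuousAt.continuousWithinAt
    · intro θ hθ
      rw [hop.interior_eq] at hθ
      rw [(hb'' θ hθ).deriv]
      exact hbpos θ hθ
  obtain ⟨θ₁, h1s, e1⟩ := hI ▸ hμ₁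
  obtain ⟨θj, hjs, ej⟩ := hI ▸ hμj
  have hθlt : θj < θ₁ := by
    rcases lt_trichotomy θj θ₁ with h | h | h
    · exact h
    · exfalso; rw [← e1, ← ej, h] at hlt; exact lt_irrefl _ hlt
    · exfalso; have := hmono h1s hjs h; rw [e1, ej] at this; linarith
  have hkl1 : ∀ θ ∈ interior Θ, kl μ₁ (b' θ) = klg b (b' θ₁) θ₁ θ := by
    intro θ hθ; rw [← e1, hkl θ₁ h1s θ hθ, klg_eq]
  have hklj : ∀ θ ∈ interior Θ, kl μj (b' θ) = klg b (b' θj) θj θ := by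
    intro θ hθ; rw [← ej, hkl θj hjs θ hθ, klg_eq]
  have hset : ∀ x y : ℝ, {v : ℝ | ∃ lam ∈ Iset, v = x * kl μ₁ lam + y * kl μj lam}
      = {v | ∃ θ ∈ interior Θ, v = x * klg b (b' θ₁) θ₁ θ + y * klg b (b' θj) θj θ} := by
    intro x y; ext v; constructor
    · rintro ⟨lam, hlam, rfl⟩
      rw [hI] at hlam; obtain ⟨θ, hθ, rfl⟩ := hlam
      exact ⟨θ, hθ, by rw [hkl1 θ hθ, hklj θ hθ]⟩
    · rintro ⟨θ, hθ, rfl⟩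
      exact ⟨b' θ, by rw [hI]; exact mem_image_of_mem _ hθ,
        by rw [hkl1 θ hθ, hklj θ hθ]⟩
  have hΦG : ∀ x y : ℝ, Φ x y = sInf {v | ∃ θ ∈ interior Θ,
      v = x * klg b (b' θ₁) θ₁ θ + y * klg b (b' θj) θj θ} := fun x y => by
    rw [hΦ, hset]
  obtain ⟨key1, part2⟩ := mono_aux hco hop hder hmono h1s hjs hθlt hΦG
  have hklj1 : kl μj μ₁ = klg b (b' θj) θj θ₁ := by rw [← e1]; exact hklj θ₁ h1s
  have part4 : ∀ x : ℝ, 0 ≤ x → ∀ y : ℝ, 0 < y → Φ x y < y * kl μj μ₁ := by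
    intro x hx y hy; rw [hklj1]; exact key1 x hx y hy
  -- reflected application for part 3
  have hcoN : Convex ℝ (-(interior Θ)) := hco.neg
  have hopN : IsOpen (-(interior Θ)) := hop.neg
  have hderN : ∀ θ ∈ -(interior Θ), HasDerivAt (fun t => b (-t)) (-b' (-θ)) θ := by
    intro θ hθ
    have h0 : -θ ∈ interior Θ := Set.mem_neg.mp hθ
    have h2 := (hb' (-θ) h0).comp θ (hasDerivAt_neg θ)
    simp only [mul_neg, mul_one] at h2
    exact h2
  have hmonoN : StrictMonoOn (fun t => -b' (-t)) (-(interior Θ)) := by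
    intro a ha c hc hac
    simp only
    have : b' (-c) < b' (-a) :=
      hmono (Set.mem_neg.mp hc) (Set.mem_neg.mp ha) (by linarith)
    linarith
  have h1N : -θj ∈ -(interior Θ) := by rw [Set.mem_neg, neg_neg]; exact hjs
  have hjN : -θ₁ ∈ -(interior Θ) := by rw [Set.mem_neg, neg_neg]; exact h1s
  have hθltN : -θ₁ < -θj := by linarith
  have hGN : ∀ x y : ℝ, Φ y x = sInf {v | ∃ θ ∈ -(interior Θ),
      v = x * klg (fun t => b (-t)) ((fun t => -b' (-t)) (-θj)) (-θj) θ
        + y * klg (fun t => b (-t)) ((fun t => -b' (-t)) (-θ₁)) (-θ₁) θ} := by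
    intro x y
    rw [hΦG y x]
    congr 1
    ext v
    constructor
    · rintro ⟨θ, hθ, rfl⟩
      refine ⟨-θ, by rw [Set.mem_neg, neg_neg]; exact hθ, ?_⟩
      simp only [klg_eq, neg_neg]
      ring
    · rintro ⟨θ, hθ, rfl⟩
      refine ⟨-θ, Set.mem_neg.mp hθ, ?_⟩
      simp only [klg_eq, neg_neg]
      ring
  obtain ⟨-, part3'⟩ := mono_aux hcoN hopN hderN hmonoN h1N hjN hθltN
    (G := fun x y => Φ y x) hGN
  have part3 : ∀ x : ℝ, 0 < x → StrictMonoOn (fun y => Φ x y) (Set.Ici 0) :=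
    fun x hx => part3' x hx
  -- continuity
  have hklnn : ∀ lam ∈ Iset, 0 ≤ kl μ₁ lam ∧ 0 ≤ kl μj lam := by
    intro lam hlam
    rw [hI] at hlam; obtain ⟨θ, hθ, rfl⟩ := hlam
    rw [hkl1 θ hθ, hklj θ hθ]
    exact ⟨klg_nonneg hco hder hmono h1s hθ, klg_nonneg hco hder hmono hjs hθ⟩
  have hSne : ∀ x y : ℝ,
      {v : ℝ | ∃ lam ∈ Iset, v = x * kl μ₁ lam + y * kl μj lam}.Nonempty :=
    fun x y => ⟨_, μ₁, hμ₁, rfl⟩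
  have hSbdd : ∀ x y : ℝ, 0 ≤ x → 0 ≤ y →
      BddBelow {v : ℝ | ∃ lam ∈ Iset, v = x * kl μ₁ lam + y * kl μj lam} := by
    intro x y hx hy
    refine ⟨0, ?_⟩
    rintro v ⟨lam, hlam, rfl⟩
    obtain ⟨ha, hb0⟩ := hklnn lam hlam
    exact add_nonneg (mul_nonneg hx ha) (mul_nonneg hy hb0)
  have hΦle : ∀ x y : ℝ, 0 ≤ x → 0 ≤ y → ∀ lam ∈ Iset,
      Φ x y ≤ x * kl μ₁ lam + y * kl μj lam := by
    intro x y hx hy lam hlam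
    rw [hΦ]
    exact csInf_le (hSbdd x y hx hy) ⟨lam, hlam, rfl⟩
  have hΦnn : ∀ x y : ℝ, 0 ≤ x → 0 ≤ y → 0 ≤ Φ x y := by
    intro x y hx hy
    rw [hΦ]
    apply le_csInf (hSne x y)
    rintro v ⟨lam, hlam, rfl⟩
    obtain ⟨ha, hb0⟩ := hklnn lam hlam
    exact add_nonneg (mul_nonneg hx ha) (mul_nonneg hy hb0)
  have hkl11 : kl μ₁ μ₁ = 0 := by
    have h := hkl θ₁ h1s θ₁ h1s
    rw [e1] at h
    rw [h]; ring
  have hkljj : kl μj μj = 0 := by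
    have h := hkl θj hjs θj hjs
    rw [ej] at h
    rw [h]; ring
  have hub1 : ∀ x y : ℝ, 0 ≤ x → 0 ≤ y → Φ x y ≤ y * kl μj μ₁ := by
    intro x y hx hy
    have h := hΦle x y hx hy μ₁ hμ₁
    rw [hkl11] at h; linarith
  have hub2 : ∀ x y : ℝ, 0 ≤ x → 0 ≤ y → Φ x y ≤ x * kl μ₁ μj := by
    intro x y hx hy
    have h := hΦle x y hx hy μj hμj
    rw [hkljj] at h; linarith
  have hUopen : IsOpen (Ioi (0:ℝ) ×ˢ Ioi (0:ℝ)) := isOpen_Ioi.prod isOpen_Ioi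
  have hconc : ConcaveOn ℝ (Ioi (0:ℝ) ×ˢ Ioi (0:ℝ)) (fun p : ℝ × ℝ => Φ p.1 p.2) := by
    refine ⟨(convex_Ioi (0:ℝ)).prod (convex_Ioi 0), ?_⟩
    rintro p hp q hq a cc ha hcc hacc
    obtain ⟨hp1, hp2⟩ := mem_prod.mp hp
    obtain ⟨hq1, hq2⟩ := mem_prod.mp hq
    have hfst : (a • p + cc • q).1 = a * p.1 + cc * q.1 := by simp [smul_eq_mul]
    have hsnd : (a • p + cc • q).2 = a * p.2 + cc * q.2 := by simp [smul_eq_mul]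
    show a • Φ p.1 p.2 + cc • Φ q.1 q.2 ≤ Φ (a • p + cc • q).1 (a • p + cc • q).2
    rw [hfst, hsnd, hΦ (a * p.1 + cc * q.1) (a * p.2 + cc * q.2)]
    apply le_csInf (hSne _ _)
    rintro v ⟨lam, hlam, rfl⟩
    have h1 := hΦle p.1 p.2 (le_of_lt hp1) (le_of_lt hp2) lam hlam
    have h2 := hΦle q.1 q.2 (le_of_lt hq1) (le_of_lt hq2) lam hlam
    have e : (a * p.1 + cc * q.1) * kl μ₁ lam + (a * p.2 + cc * q.2) * kl μj lam
        = a * (p.1 * kl μ₁ lam + p.2 * kl μj lam)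
          + cc * (q.1 * kl μ₁ lam + q.2 * kl μj lam) := by ring
    rw [e]
    simp only [smul_eq_mul]
    have h3 := mul_le_mul_of_nonneg_left h1 ha
    have h4 := mul_le_mul_of_nonneg_left h2 hcc
    linarith
  have hcontU : ContinuousOn (fun p : ℝ × ℝ => Φ p.1 p.2) (Ioi (0:ℝ) ×ˢ Ioi (0:ℝ)) :=
    hconc.continuousOn hUopen
  have hcontQ : ContinuousOn (fun p : ℝ × ℝ => Φ p.1 p.2) (Set.Ici 0 ×ˢ Set.Ici 0) := by
    intro p hp
    obtain ⟨hp1, hp2⟩ := mem_prod.mp hp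
    by_cases hpos : 0 < p.1 ∧ 0 < p.2
    · exact (hcontU.continuousAt
        (hUopen.mem_nhds (mem_prod.mpr ⟨hpos.1, hpos.2⟩))).continuousWithinAt
    · have hp0 : Φ p.1 p.2 = 0 := by
        rcases not_and_or.mp hpos with h | h
        · have h10 : p.1 = 0 := le_antisymm (not_lt.mp h) hp1
          have hu := hub2 p.1 p.2 hp1 hp2
          have hn := hΦnn p.1 p.2 hp1 hp2
          have hz : p.1 * kl μ₁ μj = 0 := by rw [h10]; ring
          linarith
        · have h20 : p.2 = 0 := le_antisymm (not_lt.mp h) hp2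
          have hu := hub1 p.1 p.2 hp1 hp2
          have hn := hΦnn p.1 p.2 hp1 hp2
          have hz : p.2 * kl μj μ₁ = 0 := by rw [h20]; ring
          linarith
      have key : Tendsto (fun q : ℝ × ℝ => Φ q.1 q.2)
          (𝓝[Set.Ici 0 ×ˢ Set.Ici 0] p) (𝓝 0) := by
        rcases not_and_or.mp hpos with h | h
        · have h10 : p.1 = 0 := le_antisymm (not_lt.mp h) hp1
          apply squeeze_zero'
          · exact eventually_mem_nhdsWithin.mono (fun q hq =>
              hΦnn q.1 q.2 (mem_prod.mp hq).1 (mem_prod.mp hq).2)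
          · exact eventually_mem_nhdsWithin.mono (fun q hq =>
              hub2 q.1 q.2 (mem_prod.mp hq).1 (mem_prod.mp hq).2)
          · have ht : Tendsto (fun q : ℝ × ℝ => q.1 * kl μ₁ μj) (𝓝 p)
                (𝓝 (p.1 * kl μ₁ μj)) := (continuous_fst.mul continuous_const).tendsto p
            have : p.1 * kl μ₁ μj = 0 := by rw [h10, zero_mul]
            rw [this] at ht
            exact ht.mono_left nhdsWithin_le_nhds
        · have h20 : p.2 = 0 := le_antisymm (not_lt.mp h) hp2
          apply squeeze_zero'
          · exact eventually_mem_nhdsWithin.mono (fun q hq =>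
              hΦnn q.1 q.2 (mem_prod.mp hq).1 (mem_prod.mp hq).2)
          · exact eventually_mem_nhdsWithin.mono (fun q hq =>
              hub1 q.1 q.2 (mem_prod.mp hq).1 (mem_prod.mp hq).2)
          · have ht : Tendsto (fun q : ℝ × ℝ => q.2 * kl μj μ₁) (𝓝 p)
                (𝓝 (p.2 * kl μj μ₁)) := (continuous_snd.mul continuous_const).tendsto p
            have : p.2 * kl μj μ₁ = 0 := by rw [h20, zero_mul]
            rw [this] at ht
            exact ht.mono_left nhdsWithin_le_nhds
      show Tendsto (fun q : ℝ × ℝ => Φ q.1 q.2)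
          (𝓝[Set.Ici 0 ×ˢ Set.Ici 0] p) (𝓝 (Φ p.1 p.2))
      rw [hp0]
      exact key
  exact ⟨hcontQ, part2, part3, part4⟩
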